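/- Let $\Phi \in \mathbb{R}^{M \times N}$ and let $\kappa \ge 2$ and $s \ge 2$ be integers. Then the block restricted isometry constants of $\Phi$ satisfy $\delta_{\kappa s | \mathcal{I}} \le (2\kappa - 1)\, \delta_{s | \mathcal{I}}$. -/

import Mathlib

open Finset

/-- The space of block-structured vectors in `ℝ^N`, where `N = d 0 + ⋯ + d (l-1)`:
block `i` lives in `ℝ^(d i)` and the whole space carries the `ℓ₂` norm. -/
abbrev BlockVec {l : ℕ} (d : Fin l → ℕ) :=
  PiLp 2 (fun i : Fin l => EuclideanSpace ℝ (Fin (d i)))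

/-- `x` is block `s`-sparse: at most `s` nonzero blocks. -/
def BlockSparse {l : ℕ} {d : Fin l → ℕ} (s : ℕ) (x : BlockVec d) : Prop :=
  ∃ S : Finset (Fin l), S.card ≤ s ∧ ∀ i ∉ S, x i = 0

/-- The mixed `ℓ₂/ℓ₁` norm `‖x‖_{2,ℐ} = ∑ i, ‖x[i]‖₂`. -/
noncomputable def blockL1 {l : ℕ} {d : Fin l → ℕ} (x : BlockVec d) : ℝ :=
  ∑ i, ‖x i‖

/-- `x_S`: keep the blocks indexed by `S`, zero out the rest. -/
def blockRestrict {l : ℕ} {d : Fin l → ℕ} (x : BlockVec d) (S : Finset (Fin l)) :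
    BlockVec d := WithLp.toLp 2 (fun i => if i ∈ S then x i else 0)

/-- The set of admissible block restricted isometry constants of order `s` for `Φ`:
`δ ≥ 0` such that `(1-δ)‖x‖² ≤ ‖Φx‖² ≤ (1+δ)‖x‖²` for every block `s`-sparse `x`.
The block RIC `δ_{s|ℐ}` is the least element of this set. -/
def ricSet {l M : ℕ} {d : Fin l → ℕ}
    (Φ : BlockVec d →ₗ[ℝ] EuclideanSpace ℝ (Fin M)) (s : ℕ) : Set ℝ :=
  {δ | 0 ≤ δ ∧ ∀ x : BlockVec d, BlockSparse s x →
    (1 - δ) * ‖x‖ ^ 2 ≤ ‖Φ x‖ ^ 2 ∧ ‖Φ x‖ ^ 2 ≤ (1 + δ) * ‖x‖ ^ 2}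

section BlockRICAux

open scoped RealInnerProductSpace

variable {l M : ℕ} {d : Fin l → ℕ}

private lemma count_mem_aux {α : Type*} [DecidableEq α] (T : Finset α) {p : α} (hp : p ∈ T)
    {s : ℕ} (hs : 1 ≤ s) :
    ((T.powersetCard s).filter (fun W => p ∈ W)).card = (T.card - 1).choose (s - 1) := by
  have : ((T.powersetCard s).filter (fun W => p ∈ W)).card
      = ((T.erase p).powersetCard (s - 1)).card := by
    apply Finset.card_nbij' (fun W => W.erase p) (fun W => insert p W)
    · intro W hW
      simp only [mem_coe, mem_filter, mem_powersetCard] at hW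
      obtain ⟨⟨hsub, hcard⟩, hpW⟩ := hW
      rw [mem_coe, mem_powersetCard]
      exact ⟨erase_subset_erase p hsub, by rw [card_erase_of_mem hpW, hcard]⟩
    · intro W hW
      rw [mem_coe, mem_powersetCard] at hW
      obtain ⟨hsub, hcard⟩ := hW
      have hpW : p ∉ W := fun h => (mem_erase.mp (hsub h)).1 rfl
      rw [mem_coe, mem_filter, mem_powersetCard]
      refine ⟨⟨?_, ?_⟩, mem_insert_self p W⟩
      · intro a ha
        rcases mem_insert.mp ha with h | h
        · exact h ▸ hp
        · exact (erase_subset p T) (hsub h)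
      · rw [card_insert_of_notMem hpW, hcard]
        omega
    · intro W hW
      simp only [mem_coe, mem_filter] at hW
      exact insert_erase hW.2
    · intro W hW
      rw [mem_coe, mem_powersetCard] at hW
      have hpW : p ∉ W := fun h => (mem_erase.mp (hW.1 h)).1 rfl
      exact erase_insert hpW
  rw [this, card_powersetCard, card_erase_of_mem hp]

private lemma count_pair_aux {α : Type*} [DecidableEq α] (T : Finset α) {p q : α} (hp : p ∈ T)
    (hq : q ∈ T) (hpq : p ≠ q) {s : ℕ} (hs : 2 ≤ s) :
    ((T.powersetCard s).filter (fun W => p ∈ W ∧ q ∈ W)).card = (T.card - 2).choose (s - 2) := by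
  have key : ((T.powersetCard s).filter (fun W => p ∈ W ∧ q ∈ W)).card
      = (((T.erase p).powersetCard (s-1)).filter (fun W => q ∈ W)).card := by
    apply Finset.card_nbij' (fun W => W.erase p) (fun W => insert p W)
    · intro W hW
      simp only [mem_coe, mem_filter, mem_powersetCard] at hW ⊢
      obtain ⟨⟨hsub, hcard⟩, hpW, hqW⟩ := hW
      exact ⟨⟨erase_subset_erase p hsub, by rw [card_erase_of_mem hpW, hcard]⟩,
        mem_erase.mpr ⟨(Ne.symm hpq), hqW⟩⟩
    · intro W hW
      simp only [mem_coe, mem_filter, mem_powersetCard] at hW ⊢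
      obtain ⟨⟨hsub, hcard⟩, hqW⟩ := hW
      have hpW : p ∉ W := fun h => (mem_erase.mp (hsub h)).1 rfl
      refine ⟨⟨?_, ?_⟩, mem_insert_self p W, mem_insert_of_mem hqW⟩
      · intro a ha
        rcases mem_insert.mp ha with h | h
        · exact h ▸ hp
        · exact (erase_subset p T) (hsub h)
      · rw [card_insert_of_notMem hpW, hcard]
        omega
    · intro W hW
      simp only [mem_coe, mem_filter] at hW
      exact insert_erase hW.2.1
    · intro W hW
      simp only [mem_coe, mem_filter, mem_powersetCard] at hW
      have hpW : p ∉ W := fun h => (mem_erase.mp (hW.1.1 h)).1 rfl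
      exact erase_insert hpW
  rw [key, count_mem_aux (T.erase p) (mem_erase.mpr ⟨Ne.symm hpq, hq⟩) (by omega),
    card_erase_of_mem hp]
  congr 1

private lemma sum_pc_expand {α : Type*} [DecidableEq α] (T : Finset α) (s : ℕ) (f : α → α → ℝ) :
    ∑ W ∈ T.powersetCard s, ∑ p ∈ W, ∑ q ∈ W, f p q
      = ∑ p ∈ T, ∑ q ∈ T,
          (((T.powersetCard s).filter (fun W => p ∈ W ∧ q ∈ W)).card : ℝ) * f p q := by
  have step : ∀ W ∈ T.powersetCard s, ∑ p ∈ W, ∑ q ∈ W, f p q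
      = ∑ p ∈ T, ∑ q ∈ T, (if p ∈ W ∧ q ∈ W then f p q else 0) := by
    intro W hW
    have hWT : W ⊆ T := (mem_powersetCard.mp hW).1
    have h1 : ∀ p, ∑ q ∈ T, (if p ∈ W ∧ q ∈ W then f p q else 0)
        = if p ∈ W then ∑ q ∈ W, f p q else 0 := by
      intro p
      by_cases hp : p ∈ W
      · simp only [hp, true_and, if_true]
        rw [Finset.sum_ite_mem, inter_eq_right.mpr hWT]
      · simp [hp]
    rw [Finset.sum_congr rfl (fun p _ => h1 p), Finset.sum_ite_mem, inter_eq_right.mpr hWT]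
  rw [Finset.sum_congr rfl step, Finset.sum_comm]
  refine Finset.sum_congr rfl (fun p _ => ?_)
  rw [Finset.sum_comm]
  refine Finset.sum_congr rfl (fun q _ => ?_)
  rw [← Finset.sum_filter, Finset.sum_const, nsmul_eq_mul]

private lemma sum_pc_eval {α : Type*} [DecidableEq α] (T : Finset α) {s : ℕ} (hs : 2 ≤ s)
    (f : α → α → ℝ) :
    ∑ W ∈ T.powersetCard s, ∑ p ∈ W, ∑ q ∈ W, f p q
      = ((T.card - 1).choose (s-1) : ℝ) * (∑ p ∈ T, f p p)
        + ((T.card - 2).choose (s-2) : ℝ)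
            * ((∑ p ∈ T, ∑ q ∈ T, f p q) - ∑ p ∈ T, f p p) := by
  rw [sum_pc_expand T s f]
  have step : ∀ p ∈ T, ∑ q ∈ T,
      (((T.powersetCard s).filter (fun W => p ∈ W ∧ q ∈ W)).card : ℝ) * f p q
      = ((T.card - 1).choose (s-1) : ℝ) * f p p
        + ((T.card - 2).choose (s-2) : ℝ) * ((∑ q ∈ T, f p q) - f p p) := by
    intro p hp
    rw [← Finset.add_sum_erase _ _ hp]
    have hc1 : (((T.powersetCard s).filter (fun W => p ∈ W ∧ p ∈ W)).card : ℝ)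
        = ((T.card - 1).choose (s-1) : ℝ) := by
      have h := count_mem_aux T hp (s := s) (by omega)
      simp only [and_self]
      rw [h]
    rw [hc1]
    congr 1
    rw [Finset.sum_congr rfl (fun q hq => by
      rw [count_pair_aux T hp (Finset.mem_of_mem_erase hq)
        (fun h => (Finset.mem_erase.mp hq).1 h.symm) hs]),
      ← Finset.mul_sum, Finset.sum_erase_eq_sub hp]
  rw [Finset.sum_congr rfl step, Finset.sum_add_distrib, ← Finset.mul_sum, ← Finset.mul_sum]
  congr 1
  rw [Finset.sum_sub_distrib]

private lemma blockRestrict_eq_sum (x : BlockVec d) (W : Finset (Fin l)) :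
    blockRestrict x W = ∑ p ∈ W, blockRestrict x {p} := by
  refine PiLp.ext (fun i => ?_)
  rw [WithLp.ofLp_sum, Finset.sum_apply]
  simp only [blockRestrict, mem_singleton, PiLp.toLp_apply]
  rw [Finset.sum_ite_eq W i (fun _ => x i)]

private lemma eq_sum_singl {x : BlockVec d} {T : Finset (Fin l)} (hx : ∀ i ∉ T, x i = 0) :
    x = ∑ p ∈ T, blockRestrict x {p} := by
  rw [← blockRestrict_eq_sum]
  refine PiLp.ext (fun i => ?_)
  by_cases h : i ∈ T <;> simp [blockRestrict, h, hx i]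

variable {F : Type*} [NormedAddCommGroup F] [InnerProductSpace ℝ F]

private lemma norm_sq_map_sum (Ψ : BlockVec d →ₗ[ℝ] F) (A : Finset (Fin l))
    (g : Fin l → BlockVec d) :
    ‖Ψ (∑ p ∈ A, g p)‖^2 = ∑ p ∈ A, ∑ q ∈ A, ⟪Ψ (g p), Ψ (g q)⟫ := by
  rw [← real_inner_self_eq_norm_sq, map_sum, sum_inner]
  exact Finset.sum_congr rfl (fun p _ => inner_sum _ _ _)

private lemma inner_singleton_zero (x : BlockVec d) {p q : Fin l} (h : p ≠ q) :
    ⟪blockRestrict x {p}, blockRestrict x {q}⟫ = 0 := by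
  rw [PiLp.inner_apply]
  apply Finset.sum_eq_zero
  intro i _
  by_cases hp : i = p
  · have hq : blockRestrict x {q} i = 0 := by
      simp only [blockRestrict, mem_singleton, PiLp.toLp_apply]
      rw [if_neg (by rw [hp]; exact h)]
    rw [hq, inner_zero_right]
  · have hp' : blockRestrict x {p} i = 0 := by
      simp only [blockRestrict, mem_singleton, PiLp.toLp_apply]
      rw [if_neg hp]
    rw [hp', inner_zero_left]

/-- The master identity: for any linear `Ψ` and `x` supported on `T`,
`2·(K+L(n-1))·‖Ψx‖² = 2n·∑_{|W|=s} ‖Ψ x_W‖² - (K-L)·∑_{p,q} ‖Ψ(x_p - x_q)‖²`. -/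
private lemma master (Ψ : BlockVec d →ₗ[ℝ] F) (x : BlockVec d) (T : Finset (Fin l))
    (hx : ∀ i ∉ T, x i = 0) {s : ℕ} (hs : 2 ≤ s) :
    2*(((T.card - 1).choose (s-1) : ℝ)
        + ((T.card - 2).choose (s-2) : ℝ)*((T.card : ℝ)-1)) * ‖Ψ x‖^2
      = 2*(T.card : ℝ)*(∑ W ∈ T.powersetCard s, ‖Ψ (blockRestrict x W)‖^2)
        - (((T.card - 1).choose (s-1) : ℝ) - ((T.card - 2).choose (s-2) : ℝ))
            * (∑ p ∈ T, ∑ q ∈ T,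
                ‖Ψ (blockRestrict x {p} - blockRestrict x {q})‖^2) := by
  set f : Fin l → Fin l → ℝ :=
    fun p q => ⟪Ψ (blockRestrict x {p}), Ψ (blockRestrict x {q})⟫ with hf
  set K : ℝ := ((T.card - 1).choose (s-1) : ℝ)
  set L : ℝ := ((T.card - 2).choose (s-2) : ℝ)
  set n : ℝ := (T.card : ℝ)
  have hS2 : ‖Ψ x‖^2 = ∑ p ∈ T, ∑ q ∈ T, f p q := by
    conv_lhs => rw [eq_sum_singl hx]
    exact norm_sq_map_sum Ψ T _
  have hW : ∀ W ∈ T.powersetCard s, ‖Ψ (blockRestrict x W)‖^2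
      = ∑ p ∈ W, ∑ q ∈ W, f p q := by
    intro W _
    conv_lhs => rw [blockRestrict_eq_sum x W]
    exact norm_sq_map_sum Ψ W _
  have hA : ∑ W ∈ T.powersetCard s, ‖Ψ (blockRestrict x W)‖^2
      = K * (∑ p ∈ T, f p p) + L * ((∑ p ∈ T, ∑ q ∈ T, f p q) - ∑ p ∈ T, f p p) := by
    rw [Finset.sum_congr rfl hW]
    exact sum_pc_eval T hs f
  have hpq : ∀ p q : Fin l, ‖Ψ (blockRestrict x {p} - blockRestrict x {q})‖^2
      = f p p + f q q - 2 * f p q := by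
    intro p q
    rw [map_sub, norm_sub_sq_real, hf]
    simp only [real_inner_self_eq_norm_sq]
    ring
  have hB : ∑ p ∈ T, ∑ q ∈ T, ‖Ψ (blockRestrict x {p} - blockRestrict x {q})‖^2
      = 2*n*(∑ p ∈ T, f p p) - 2*(∑ p ∈ T, ∑ q ∈ T, f p q) := by
    have : ∀ p ∈ T, ∑ q ∈ T, ‖Ψ (blockRestrict x {p} - blockRestrict x {q})‖^2
        = n * f p p + (∑ q ∈ T, f q q) - 2 * ∑ q ∈ T, f p q := by
      intro p _
      rw [Finset.sum_congr rfl (fun q _ => hpq p q)]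
      rw [Finset.sum_sub_distrib, Finset.sum_add_distrib, Finset.sum_const, nsmul_eq_mul,
        ← Finset.mul_sum]
    rw [Finset.sum_congr rfl this]
    simp only [Finset.sum_sub_distrib, Finset.sum_add_distrib, Finset.sum_const, nsmul_eq_mul,
      ← Finset.mul_sum]
    ring
  rw [hS2, hA, hB]
  ring

set_option maxHeartbeats 1000000 in
/-- The key step: any admissible RIC constant of order `s`, multiplied by `2κ-1`, is an
admissible RIC constant of order `κs`. -/
private lemma ric_step (Φ : BlockVec d →ₗ[ℝ] EuclideanSpace ℝ (Fin M)) {s κ : ℕ}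
    (hs : 2 ≤ s) (hκ : 2 ≤ κ) {δ : ℝ} (hδ : δ ∈ ricSet Φ s) :
    (2*(κ:ℝ) - 1) * δ ∈ ricSet Φ (κ * s) := by
  obtain ⟨hδ0, hball⟩ := hδ
  have hκ1 : (2:ℝ) ≤ (κ:ℝ) := by exact_mod_cast hκ
  refine ⟨by nlinarith, ?_⟩
  intro x hx
  obtain ⟨S, hcard, hsupp⟩ := hx
  have hX0 : (0:ℝ) ≤ ‖x‖^2 := by positivity
  by_cases hns : S.card ≤ s
  · obtain ⟨lo, up⟩ := hball x ⟨S, hns, hsupp⟩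
    constructor <;> nlinarith
  -- main case : s < S.card ≤ κ s
  push_neg at hns
  set T := S with hT
  have hn2 : 2 ≤ T.card := by omega
  have hsn : s < T.card := hns
  -- notation
  set Kn : ℕ := (T.card - 1).choose (s-1) with hKn
  set Ln : ℕ := (T.card - 2).choose (s-2) with hLn
  set K : ℝ := (Kn : ℝ)
  set L : ℝ := (Ln : ℝ)
  set n : ℝ := (T.card : ℝ) with hnr
  have hrelN : (T.card - 1) * Ln = Kn * (s-1) := by
    have e1 : T.card - 1 = (T.card - 2) + 1 := by omega
    have e2 : s - 1 = (s - 2) + 1 := by omega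
    rw [hKn, hLn, e1, e2]
    exact Nat.add_one_mul_choose_eq _ _
  have hLKn : Ln ≤ Kn := by
    have e1 : T.card - 1 = (T.card - 2) + 1 := by omega
    have e2 : s - 1 = (s - 2) + 1 := by omega
    rw [hKn, hLn, e1, e2, Nat.choose_succ_succ]
    exact Nat.le_add_right _ _
  have hK1 : 0 < Kn := Nat.choose_pos (by omega)
  -- real versions
  have hrel : (n - 1) * L = K * ((s:ℝ) - 1) := by
    have hc : (((T.card - 1) * Ln : ℕ) : ℝ) = ((Kn * (s-1) : ℕ) : ℝ) := by
      exact_mod_cast congrArg (fun t : ℕ => (t : ℝ)) hrelN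
    push_cast [Nat.cast_sub (show 1 ≤ T.card by omega), Nat.cast_sub (show 1 ≤ s by omega)] at hc
    exact hc
  have hD : K + L*(n-1) = (s:ℝ)*K := by linear_combination hrel
  have hKL0 : (0:ℝ) ≤ K - L := by
    have : (Ln:ℝ) ≤ (Kn:ℝ) := by exact_mod_cast hLKn
    simp only [K, L]
    linarith
  have hKr : (0:ℝ) < K := by
    simp only [K]
    exact_mod_cast hK1
  have hsr : (0:ℝ) < (s:ℝ) := by positivity
  have hn0 : (0:ℝ) ≤ n := by positivity
  have hnks : n ≤ (κ:ℝ)*(s:ℝ) := by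
    simp only [n]
    exact_mod_cast hcard
  -- abbreviations for the four sums
  set P : ℝ := ‖Φ x‖^2 with hP
  set X : ℝ := ‖x‖^2 with hX
  set A : ℝ := ∑ W ∈ T.powersetCard s, ‖Φ (blockRestrict x W)‖^2 with hA
  set B : ℝ := ∑ p ∈ T, ∑ q ∈ T,
    ‖Φ (blockRestrict x {p} - blockRestrict x {q})‖^2 with hB
  set A' : ℝ := ∑ W ∈ T.powersetCard s, ‖(blockRestrict x W)‖^2 with hA'
  set B' : ℝ := ∑ p ∈ T, ∑ q ∈ T,
    ‖(blockRestrict x {p} - blockRestrict x {q})‖^2 with hB'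
  -- the two master identities
  have mPhi : 2*(K + L*(n-1)) * P = 2*n*A - (K-L)*B := master Φ x T hsupp hs
  have mN : 2*(K + L*(n-1)) * X = 2*n*A' - (K-L)*B' := by
    have h := master (LinearMap.id : BlockVec d →ₗ[ℝ] BlockVec d) x T hsupp hs
    simpa using h
  -- sparsity of the test vectors
  have spW : ∀ W ∈ T.powersetCard s, BlockSparse s (blockRestrict x W) := fun W hW =>
    ⟨W, le_of_eq (mem_powersetCard.mp hW).2, fun i hi => if_neg hi (t := x i)⟩
  have spD : ∀ p q : Fin l, BlockSparse s (blockRestrict x {p} - blockRestrict x {q}) := by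
    intro p q
    refine ⟨{p, q}, le_trans ((Finset.card_insert_le _ _).trans (by simp)) hs, ?_⟩
    intro i hi
    simp only [Finset.mem_insert, Finset.mem_singleton, not_or] at hi
    show blockRestrict x {p} i - blockRestrict x {q} i = 0
    simp [blockRestrict, hi.1, hi.2]
  -- RIC bounds on the sums
  have hAub : A ≤ (1+δ) * A' := by
    rw [hA, hA', Finset.mul_sum]
    exact Finset.sum_le_sum (fun W hW => (hball _ (spW W hW)).2)
  have hAlb : (1-δ) * A' ≤ A := by
    rw [hA, hA', Finset.mul_sum]
    exact Finset.sum_le_sum (fun W hW => (hball _ (spW W hW)).1)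
  have hBub : B ≤ (1+δ) * B' := by
    rw [hB, hB', Finset.mul_sum]
    refine Finset.sum_le_sum (fun p _ => ?_)
    rw [Finset.mul_sum]
    exact Finset.sum_le_sum (fun q _ => (hball _ (spD p q)).2)
  have hBlb : (1-δ) * B' ≤ B := by
    rw [hB, hB', Finset.mul_sum]
    refine Finset.sum_le_sum (fun p _ => ?_)
    rw [Finset.mul_sum]
    exact Finset.sum_le_sum (fun q _ => (hball _ (spD p q)).1)
  -- evaluation of A'
  have hdiagsum : ∀ p ∈ T, (∑ q ∈ T,
      (⟪blockRestrict x {p}, blockRestrict x {q}⟫ : ℝ)) = ⟪blockRestrict x {p}, blockRestrict x {p}⟫ :=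
    fun p hp => Finset.sum_eq_single_of_mem p hp
      (fun q _ hqp => inner_singleton_zero x (fun h => hqp h.symm))
  have hXsum : X = ∑ p ∈ T, (⟪blockRestrict x {p}, blockRestrict x {p}⟫ : ℝ) := by
    have h0 : X = ∑ p ∈ T, ∑ q ∈ T, (⟪blockRestrict x {p}, blockRestrict x {q}⟫ : ℝ) := by
      rw [hX]
      conv_lhs => rw [eq_sum_singl hsupp]
      have h := norm_sq_map_sum (LinearMap.id : BlockVec d →ₗ[ℝ] BlockVec d) T
        (fun p => blockRestrict x {p})
      simpa using h
    rw [h0]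
    exact Finset.sum_congr rfl hdiagsum
  have hA'eq : A' = K * X := by
    have hWn : ∀ W ∈ T.powersetCard s, ‖(blockRestrict x W)‖^2
        = ∑ p ∈ W, ∑ q ∈ W, (⟪blockRestrict x {p}, blockRestrict x {q}⟫ : ℝ) := by
      intro W _
      rw [blockRestrict_eq_sum x W]
      have h := norm_sq_map_sum (LinearMap.id : BlockVec d →ₗ[ℝ] BlockVec d) W
        (fun p => blockRestrict x {p})
      simpa using h
    rw [hA', Finset.sum_congr rfl hWn,
      sum_pc_eval T hs (fun p q => (⟪blockRestrict x {p}, blockRestrict x {q}⟫ : ℝ))]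
    have hS2S1 : (∑ p ∈ T, ∑ q ∈ T, (⟪blockRestrict x {p}, blockRestrict x {q}⟫ : ℝ))
        = ∑ p ∈ T, (⟪blockRestrict x {p}, blockRestrict x {p}⟫ : ℝ) :=
      Finset.sum_congr rfl hdiagsum
    rw [hS2S1, ← hXsum]
    ring
  -- final algebra
  have hB'val : (K-L)*B' = 2*n*A' - 2*((s:ℝ)*K)*X := by
    linear_combination mN - 2*X*hD
  have e1 : 2*((s:ℝ)*K)*P = 2*n*A - (K-L)*B := by
    linear_combination mPhi - 2*P*hD
  have e1N : 2*((s:ℝ)*K)*X = 2*n*A' - (K-L)*B' := by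
    linear_combination mN - 2*X*hD
  have hδX : 0 ≤ δ*X*((2*(κ:ℝ)-1)*(s:ℝ) - (2*n - (s:ℝ))) := by
    apply mul_nonneg (mul_nonneg hδ0 hX0)
    linarith
  constructor
  · -- lower bound
    have s1lo : 2*n*((1-δ)*A') - (K-L)*((1+δ)*B') ≤ 2*n*A - (K-L)*B :=
      sub_le_sub (mul_le_mul_of_nonneg_left hAlb (by linarith))
        (mul_le_mul_of_nonneg_left hBub hKL0)
    have e2lo : 2*n*((1-δ)*A') - (K-L)*((1+δ)*B')
        = 2*((s:ℝ)*K)*X - 2*K*X*δ*(2*n-(s:ℝ)) := by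
      linear_combination (-(1+δ))*hB'val - 4*n*δ*hA'eq
    have e3 : 2*((s:ℝ)*K)*X - 2*K*X*δ*(2*n-(s:ℝ)) ≤ 2*((s:ℝ)*K)*P := by
      linarith [e1, s1lo, e2lo]
    have e4 : ((s:ℝ)*K)*((1 - (2*(κ:ℝ)-1)*δ)*X) ≤ ((s:ℝ)*K)*P := by
      nlinarith [e3, mul_nonneg hKr.le hδX]
    exact le_of_mul_le_mul_left e4 (mul_pos hsr hKr)
  · -- upper bound
    have s1up : 2*n*A - (K-L)*B ≤ 2*n*((1+δ)*A') - (K-L)*((1-δ)*B') :=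
      sub_le_sub (mul_le_mul_of_nonneg_left hAub (by linarith))
        (mul_le_mul_of_nonneg_left hBlb hKL0)
    have e2up : 2*n*((1+δ)*A') - (K-L)*((1-δ)*B')
        = 2*((s:ℝ)*K)*X + 2*K*X*δ*(2*n-(s:ℝ)) := by
      linear_combination (δ-1)*hB'val + 4*n*δ*hA'eq
    have e3 : 2*((s:ℝ)*K)*P ≤ 2*((s:ℝ)*K)*X + 2*K*X*δ*(2*n-(s:ℝ)) := by
      linarith [e1, s1up, e2up]
    have e4 : ((s:ℝ)*K)*P ≤ ((s:ℝ)*K)*((1 + (2*(κ:ℝ)-1)*δ)*X) := by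
      nlinarith [e3, mul_nonneg hKr.le hδX]
    exact le_of_mul_le_mul_left e4 (mul_pos hsr hKr)

end BlockRICAux

/-- Lemma 2.4: `δ_{κs|ℐ} ≤ (2κ-1) δ_{s|ℐ}` for integers `κ ≥ 2`, `s ≥ 2`. -/
theorem blockRIC_mul_le {l M : ℕ} {d : Fin l → ℕ}
    (Φ : BlockVec d →ₗ[ℝ] EuclideanSpace ℝ (Fin M))
    (κ s : ℕ) (hκ : 2 ≤ κ) (hs : 2 ≤ s) (δs δκs : ℝ)
    (h1 : IsLeast (ricSet Φ s) δs) (h2 : IsLeast (ricSet Φ (κ * s)) δκs) :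
    δκs ≤ (2 * (κ : ℝ) - 1) * δs := by
  exact h2.2 (ric_step Φ hs hκ h1.1)
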